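/- Let Q ∈ ℝ^{n×n} be symmetric positive definite, A ∈ ℝ^{m×n}, b ∈ ℝᵐ, d ∈ ℝⁿ and τ > 0. Suppose α* > 0 satisfies ‖(A Q⁻¹ Aᵀ + α* I)⁻¹ (A Q⁻¹ d + b)‖₂ = τ, and set y* := −(A Q⁻¹ Aᵀ + α* I)⁻¹ (A Q⁻¹ d + b). Then y* maximizes y ↦ −(1/2)(d + Aᵀy)ᵀ Q⁻¹ (d + Aᵀy) − bᵀ y over {y ∈ ℝᵐ : ‖y‖₂ ≤ τ}, and consequently u* := Q⁻¹(d + Aᵀ y*) is the unique global minimizer of u ↦ (1/2) uᵀ Q u − dᵀ u + τ‖A u + b‖₂ over ℝⁿ. -/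

import Mathlib

open Matrix

/-- The Euclidean (`ℓ₂`) norm of a vector in `Fin k → ℝ`. -/
noncomputable def norm2 {k : ℕ} (v : Fin k → ℝ) : ℝ := Real.sqrt (∑ i, v i ^ 2)

/-- Primal objective `u ↦ (1/2)uᵀQu − dᵀu + τ‖Au + b‖₂`. -/
noncomputable def primalObj {m n : ℕ} (Q : Matrix (Fin n) (Fin n) ℝ)
    (A : Matrix (Fin m) (Fin n) ℝ) (b : Fin m → ℝ) (d : Fin n → ℝ) (τ : ℝ)
    (u : Fin n → ℝ) : ℝ :=
  1 / 2 * (u ⬝ᵥ Q.mulVec u) - d ⬝ᵥ u + τ * norm2 (A.mulVec u + b)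

/-- Dual objective `y ↦ −(1/2)(d + Aᵀy)ᵀ Q⁻¹ (d + Aᵀy) − bᵀy`. -/
noncomputable def dualObj {m n : ℕ} (Q : Matrix (Fin n) (Fin n) ℝ)
    (A : Matrix (Fin m) (Fin n) ℝ) (b : Fin m → ℝ) (d : Fin n → ℝ)
    (y : Fin m → ℝ) : ℝ :=
  -(1 / 2) * ((d + Aᵀ.mulVec y) ⬝ᵥ Q⁻¹.mulVec (d + Aᵀ.mulVec y)) - b ⬝ᵥ y

lemma norm2_nonneg' {k : ℕ} (v : Fin k → ℝ) : 0 ≤ norm2 v := Real.sqrt_nonneg _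

lemma dot_self_eq' {k : ℕ} (v : Fin k → ℝ) : v ⬝ᵥ v = norm2 v * norm2 v := by
  rw [← sq, norm2, Real.sq_sqrt (Finset.sum_nonneg fun i _ => sq_nonneg _), dotProduct]
  simp [sq]

lemma norm2_neg' {k : ℕ} (v : Fin k → ℝ) : norm2 (-v) = norm2 v := by
  simp [norm2]

lemma norm2_smul' {k : ℕ} (a : ℝ) (v : Fin k → ℝ) : norm2 (a • v) = |a| * norm2 v := by
  simp only [norm2, Pi.smul_apply, smul_eq_mul, mul_pow, ← Finset.mul_sum]
  rw [Real.sqrt_mul (sq_nonneg a), Real.sqrt_sq_eq_abs]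

lemma dot_le_norm2' {k : ℕ} (v w : Fin k → ℝ) : v ⬝ᵥ w ≤ norm2 v * norm2 w := by
  have h4 : (v ⬝ᵥ w) ^ 2 ≤ (∑ i, v i ^ 2) * ∑ i, w i ^ 2 := by
    simpa [dotProduct] using Finset.sum_mul_sq_le_sq_mul_sq Finset.univ v w
  calc v ⬝ᵥ w ≤ Real.sqrt ((v ⬝ᵥ w) ^ 2) := by
        rw [Real.sqrt_sq_eq_abs]; exact le_abs_self _
    _ ≤ Real.sqrt ((∑ i, v i ^ 2) * ∑ i, w i ^ 2) := Real.sqrt_le_sqrt h4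
    _ = norm2 v * norm2 w := by
        rw [Real.sqrt_mul (Finset.sum_nonneg fun i _ => sq_nonneg _)]; rfl

lemma dot_symm' {k : ℕ} (S : Matrix (Fin k) (Fin k) ℝ) (hS : Sᵀ = S) (x y : Fin k → ℝ) :
    x ⬝ᵥ S *ᵥ y = y ⬝ᵥ S *ᵥ x := by
  rw [dotProduct_mulVec, ← mulVec_transpose, hS, dotProduct_comm]

lemma transfer' {m n : ℕ} (A : Matrix (Fin m) (Fin n) ℝ) (z : Fin m → ℝ) (v : Fin n → ℝ) :
    (Aᵀ *ᵥ z) ⬝ᵥ v = z ⬝ᵥ (A *ᵥ v) := by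
  rw [mulVec_transpose, ← dotProduct_mulVec]

/-- **Theorem `th::thProx-dual-p2`, boundary (secular equation) case.**
If `α* > 0` satisfies `‖(AQ⁻¹Aᵀ + α*I)⁻¹(AQ⁻¹d + b)‖₂ = τ` and
`y* = −(AQ⁻¹Aᵀ + α*I)⁻¹(AQ⁻¹d + b)`, then `y*` maximizes the dual objective over
`{y : ‖y‖₂ ≤ τ}`, and `u* = Q⁻¹(d + Aᵀy*)` is the unique global minimizer of
`u ↦ (1/2)uᵀQu − dᵀu + τ‖Au + b‖₂`. -/
theorem stmt_14 {m n : ℕ} (Q : Matrix (Fin n) (Fin n) ℝ) (hQ : Q.PosDef)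
    (A : Matrix (Fin m) (Fin n) ℝ) (b : Fin m → ℝ) (d : Fin n → ℝ)
    (τ : ℝ) (hτ : 0 < τ)
    (αstar : ℝ) (hα : 0 < αstar)
    (hsec : norm2 ((A * Q⁻¹ * Aᵀ + αstar • (1 : Matrix (Fin m) (Fin m) ℝ))⁻¹.mulVec
      (A.mulVec (Q⁻¹.mulVec d) + b)) = τ)
    (ystar : Fin m → ℝ)
    (hy : ystar = -((A * Q⁻¹ * Aᵀ + αstar • (1 : Matrix (Fin m) (Fin m) ℝ))⁻¹.mulVec
      (A.mulVec (Q⁻¹.mulVec d) + b))) :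
    (∀ y : Fin m → ℝ, norm2 y ≤ τ → dualObj Q A b d y ≤ dualObj Q A b d ystar) ∧
    (∀ u : Fin n → ℝ, u ≠ Q⁻¹.mulVec (d + Aᵀ.mulVec ystar) →
      primalObj Q A b d τ (Q⁻¹.mulVec (d + Aᵀ.mulVec ystar)) < primalObj Q A b d τ u) := by
  set M : Matrix (Fin m) (Fin m) ℝ := A * Q⁻¹ * Aᵀ with hMdef
  set B : Matrix (Fin m) (Fin m) ℝ := M + αstar • (1 : Matrix (Fin m) (Fin m) ℝ) with hBdef
  set c : Fin m → ℝ := A.mulVec (Q⁻¹.mulVec d) + b with hcdef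
  have hQis : Q⁻¹ᵀ = Q⁻¹ := hQ.inv.isHermitian.eq
  have hMpsd : M.PosSemidef := by
    have := hQ.inv.posSemidef.mul_mul_conjTranspose_same A
    simpa [hMdef] using this
  have hMs : Mᵀ = M := hMpsd.1.eq
  have hMnn : ∀ z : Fin m → ℝ, 0 ≤ z ⬝ᵥ M *ᵥ z := by
    intro z; simpa using hMpsd.dotProduct_mulVec_nonneg z
  have hsmul : (αstar • (1 : Matrix (Fin m) (Fin m) ℝ)).PosDef := by
    refine Matrix.PosDef.of_dotProduct_mulVec_pos ?_ ?_
    · simp [IsHermitian]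
    · intro x hx
      have h1 : (αstar • (1 : Matrix (Fin m) (Fin m) ℝ)) *ᵥ x = αstar • x := by
        rw [smul_mulVec, one_mulVec]
      rw [h1, dotProduct_smul]
      exact smul_pos hα (dotProduct_star_self_pos_iff.mpr hx)
  have hBpd : B.PosDef := Matrix.PosDef.posSemidef_add hMpsd hsmul
  have hBu : IsUnit B.det := hBpd.det_pos.ne'.isUnit
  have key1 : B *ᵥ ystar = -c := by
    rw [hy, mulVec_neg, mulVec_mulVec, Matrix.mul_nonsing_inv B hBu, one_mulVec]
  have keyM : M *ᵥ ystar = -c - αstar • ystar := by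
    have h : B *ᵥ ystar = M *ᵥ ystar + αstar • ystar := by
      rw [hBdef, add_mulVec, smul_mulVec, one_mulVec]
    rw [h] at key1
    linear_combination (norm := module) key1
  have hnys : norm2 ystar = τ := by rw [hy, norm2_neg']; exact hsec
  have hyy : ystar ⬝ᵥ ystar = τ * τ := by rw [dot_self_eq', hnys]
  have hQQi : ∀ w : Fin n → ℝ, Q *ᵥ (Q⁻¹ *ᵥ w) = w := by
    intro w
    rw [mulVec_mulVec, Matrix.mul_nonsing_inv Q hQ.det_pos.ne'.isUnit, one_mulVec]
  set ustar : Fin n → ℝ := Q⁻¹ *ᵥ (d + Aᵀ *ᵥ ystar) with hustar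
  have key2 : A *ᵥ ustar + b = (-αstar) • ystar := by
    have h1 : A *ᵥ ustar + b = c + M *ᵥ ystar := by
      rw [hustar, mulVec_add, mulVec_add, hcdef, hMdef]
      simp only [mulVec_mulVec, Matrix.mul_assoc]
      abel
    rw [h1, keyM]
    module
  constructor
  · -- dual part
    intro y hny
    have hdual : ∀ z : Fin m → ℝ, dualObj Q A b d z =
        -(1/2) * (d ⬝ᵥ Q⁻¹ *ᵥ d) - z ⬝ᵥ c - (1/2) * (z ⬝ᵥ M *ᵥ z) := by
      intro z
      have h1 : (Aᵀ *ᵥ z) ⬝ᵥ Q⁻¹ *ᵥ d = z ⬝ᵥ A *ᵥ (Q⁻¹ *ᵥ d) := by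
        rw [transfer', mulVec_mulVec]
      have h2 : d ⬝ᵥ Q⁻¹ *ᵥ (Aᵀ *ᵥ z) = z ⬝ᵥ A *ᵥ (Q⁻¹ *ᵥ d) := by
        rw [dot_symm' Q⁻¹ hQis, h1]
      have h3 : (Aᵀ *ᵥ z) ⬝ᵥ Q⁻¹ *ᵥ (Aᵀ *ᵥ z) = z ⬝ᵥ M *ᵥ z := by
        rw [transfer', mulVec_mulVec, mulVec_mulVec, hMdef, Matrix.mul_assoc]
      have h4 : z ⬝ᵥ c = z ⬝ᵥ A *ᵥ (Q⁻¹ *ᵥ d) + z ⬝ᵥ b := by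
        rw [hcdef, dotProduct_add]
      simp only [dualObj, mulVec_add, dotProduct_add, add_dotProduct]
      rw [h2, h3, h1, h4, dotProduct_comm b z]
      ring
    have hq : (y - ystar) ⬝ᵥ M *ᵥ (y - ystar) =
        y ⬝ᵥ M *ᵥ y - 2 * (ystar ⬝ᵥ M *ᵥ y) + ystar ⬝ᵥ M *ᵥ ystar := by
      have hsymm := dot_symm' M hMs y ystar
      simp only [sub_dotProduct, dotProduct_sub, mulVec_sub]
      linarith
    have hcy : ∀ z : Fin m → ℝ, z ⬝ᵥ c = -(ystar ⬝ᵥ M *ᵥ z) - αstar * (ystar ⬝ᵥ z) := by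
      intro z
      have hc : c = -(M *ᵥ ystar) - αstar • ystar := by
        linear_combination (norm := module) keyM
      rw [hc, dotProduct_sub, dotProduct_neg, dotProduct_smul, smul_eq_mul,
        dot_symm' M hMs z ystar, dotProduct_comm z ystar]
    have e2 : 0 ≤ (y - ystar) ⬝ᵥ M *ᵥ (y - ystar) := hMnn _
    have e3 : y ⬝ᵥ ystar ≤ τ * τ := by
      calc y ⬝ᵥ ystar ≤ norm2 y * norm2 ystar := dot_le_norm2' _ _
        _ ≤ τ * τ := by rw [hnys]; exact mul_le_mul_of_nonneg_right hny hτ.le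
    have hMyy := dot_symm' M hMs ystar y
    have hyys : ystar ⬝ᵥ y = y ⬝ᵥ ystar := dotProduct_comm _ _
    rw [hdual y, hdual ystar, hcy y, hcy ystar]
    nlinarith [hα, e2, e3, hyy, hq]
  · -- primal part
    intro u hu
    have hQu : Q *ᵥ ustar = d + Aᵀ *ᵥ ystar := hQQi _
    have p1 : -(ystar ⬝ᵥ (A *ᵥ u + b)) ≤ τ * norm2 (A *ᵥ u + b) := by
      have := dot_le_norm2' (-ystar) (A *ᵥ u + b)
      rw [norm2_neg', hnys, neg_dotProduct] at this
      linarith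
    have p2 : τ * norm2 (A *ᵥ ustar + b) = -(ystar ⬝ᵥ (A *ᵥ ustar + b)) := by
      rw [key2, norm2_smul', dotProduct_smul, smul_eq_mul, hyy]
      rw [abs_of_neg (neg_neg_iff_pos.mpr hα), hnys]
      ring
    have hqq : u ⬝ᵥ Q *ᵥ u = (u - ustar) ⬝ᵥ Q *ᵥ (u - ustar)
        + 2 * (ustar ⬝ᵥ Q *ᵥ u) - ustar ⬝ᵥ Q *ᵥ ustar := by
      have hsymm := dot_symm' Q hQ.isHermitian.eq u ustar
      simp only [sub_dotProduct, dotProduct_sub, mulVec_sub]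
      linarith
    have hlin : ∀ z : Fin n → ℝ, d ⬝ᵥ z + ystar ⬝ᵥ (A *ᵥ z) = ustar ⬝ᵥ Q *ᵥ z := by
      intro z
      have h1 : ystar ⬝ᵥ (A *ᵥ z) = (Aᵀ *ᵥ ystar) ⬝ᵥ z := (transfer' A ystar z).symm
      have h2 : ustar ⬝ᵥ Q *ᵥ z = (Q *ᵥ ustar) ⬝ᵥ z := by
        rw [dot_symm' Q hQ.isHermitian.eq, dotProduct_comm]
      rw [h1, h2, hQu, add_dotProduct]
    have hpos : 0 < (u - ustar) ⬝ᵥ Q *ᵥ (u - ustar) := by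
      have hne : u - ustar ≠ 0 := sub_ne_zero_of_ne hu
      simpa using hQ.dotProduct_mulVec_pos hne
    have hl1 := hlin u
    have hl2 := hlin ustar
    rw [primalObj, primalObj]
    have hd1 : ystar ⬝ᵥ (A *ᵥ u + b) = ystar ⬝ᵥ (A *ᵥ u) + ystar ⬝ᵥ b := dotProduct_add _ _ _
    have hd2 : ystar ⬝ᵥ (A *ᵥ ustar + b) = ystar ⬝ᵥ (A *ᵥ ustar) + ystar ⬝ᵥ b :=
      dotProduct_add _ _ _
    nlinarith [p1, p2, hqq, hpos, hl1, hl2]
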